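/- Let h(z) = z + ∑_{n≥2} a_n z^n and g(z) = ∑_{n≥1} b_n z^n be power series convergent on the unit disk U with |b_1| < 1, and suppose ∑_{n≥2} n|a_n| + ∑_{n≥1} n|b_n| ≤ 1. Then the harmonic function f = h + conj(g) is univalent on U: for all z_1, z_2 in U with z_1 ≠ z_2, f(z_1) ≠ f(z_2). -/

import Mathlib

open Complex


lemma pow_diff_bound (z₁ z₂ : ℂ) (r : ℝ) (hr0 : 0 ≤ r) (h1 : ‖z₁‖ ≤ r) (h2 : ‖z₂‖ ≤ r)
    (k : ℕ) : ‖z₁ ^ (k + 1) - z₂ ^ (k + 1)‖ ≤ (k + 1 : ℝ) * r ^ k * ‖z₁ - z₂‖ := by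
  rw [← geom_sum₂_mul z₁ z₂ (k + 1), norm_mul]
  have hsum : ‖∑ i ∈ Finset.range (k + 1), z₁ ^ i * z₂ ^ (k + 1 - 1 - i)‖ ≤ (k + 1 : ℝ) * r ^ k := by
    calc ‖∑ i ∈ Finset.range (k + 1), z₁ ^ i * z₂ ^ (k + 1 - 1 - i)‖
        ≤ ∑ i ∈ Finset.range (k + 1), ‖z₁ ^ i * z₂ ^ (k + 1 - 1 - i)‖ := norm_sum_le _ _
      _ ≤ ∑ i ∈ Finset.range (k + 1), r ^ k := by
          apply Finset.sum_le_sum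
          intro i hi
          rw [Finset.mem_range] at hi
          have hik : i ≤ k := Nat.lt_succ_iff.mp hi
          rw [norm_mul, norm_pow, norm_pow]
          have hk : (k + 1 - 1 - i) = k - i := by omega
          rw [hk]
          calc ‖z₁‖ ^ i * ‖z₂‖ ^ (k - i) ≤ r ^ i * r ^ (k - i) := by gcongr
            _ = r ^ k := by rw [← pow_add]; congr 1; omega
      _ = (k + 1 : ℝ) * r ^ k := by simp [Finset.sum_const, nsmul_eq_mul]
  calc _ ≤ ((k + 1 : ℝ) * r ^ k) * ‖z₁ - z₂‖ := by gcongr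
    _ = _ := rfl


/-- If `h(z) = z + ∑_{n≥2} a_n z^n`, `g(z) = ∑_{n≥1} b_n z^n` with `|b_1| < 1`
and `∑_{n≥2} n|a_n| + ∑_{n≥1} n|b_n| ≤ 1`, then `f = h + conj g` is univalent on the unit disk. -/
theorem harmonic_univalent
    (a b : ℕ → ℂ) (hb1 : ‖b 1‖ < 1)
    (hsa : Summable (fun n : ℕ => ((n + 2 : ℝ)) * ‖a (n + 2)‖))
    (hsb : Summable (fun n : ℕ => ((n + 1 : ℝ)) * ‖b (n + 1)‖))
    (hcoef : (∑' n : ℕ, ((n + 2 : ℝ)) * ‖a (n + 2)‖) +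
             (∑' n : ℕ, ((n + 1 : ℝ)) * ‖b (n + 1)‖) ≤ 1)
    (f : ℂ → ℂ)
    (hf : ∀ z : ℂ, ‖z‖ < 1 →
      f z = (z + ∑' n : ℕ, a (n + 2) * z ^ (n + 2)) +
            (starRingEnd ℂ) (∑' n : ℕ, b (n + 1) * z ^ (n + 1))) :
    ∀ z₁ z₂ : ℂ, ‖z₁‖ < 1 → ‖z₂‖ < 1 → z₁ ≠ z₂ → f z₁ ≠ f z₂ := by
  
  intro z₁ z₂ h1 h2 hne hfeq
  set r : ℝ := max ‖z₁‖ ‖z₂‖ with hrdef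
  have hr0 : 0 ≤ r := le_max_of_le_left (norm_nonneg _)
  have hr1 : r < 1 := max_lt h1 h2
  have hz1r : ‖z₁‖ ≤ r := le_max_left _ _
  have hz2r : ‖z₂‖ ≤ r := le_max_right _ _
  clear_value r
  set d : ℂ := z₁ - z₂ with hddef
  have hD : 0 < ‖d‖ := by simpa [hddef, sub_eq_zero] using hne
  -- summability of shifted b
  have hsb' : Summable (fun n : ℕ => ((n : ℝ) + 2) * ‖b (n + 2)‖) := by
    have := (summable_nat_add_iff 1).mpr hsb
    refine this.congr fun n => ?_
    push_cast; ring_nf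
  set Sa : ℝ := ∑' n : ℕ, ((n : ℝ) + 2) * ‖a (n + 2)‖ with hSadef
  set Sb : ℝ := ∑' n : ℕ, ((n : ℝ) + 2) * ‖b (n + 2)‖ with hSbdef
  have hSa0 : 0 ≤ Sa := tsum_nonneg fun n => by positivity
  have hSb0 : 0 ≤ Sb := tsum_nonneg fun n => by positivity
  clear_value Sa Sb
  -- split the b-sum
  have hbsplit : (∑' n : ℕ, ((n : ℝ) + 1) * ‖b (n + 1)‖) = ‖b 1‖ + Sb := by
    rw [Summable.tsum_eq_zero_add hsb, hSbdef]
    congr 1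
    · norm_num
    · refine tsum_congr fun n => ?_
      show ((n + 1 : ℕ) + 1 : ℝ) * ‖b (n + 2)‖ = ((n : ℝ) + 2) * ‖b (n + 2)‖
      push_cast; ring
  have hkey : Sa + Sb ≤ 1 - ‖b 1‖ := by
    have := hcoef
    rw [hbsplit] at this
    linarith
  -- summability of series at given points
  have hsumA : ∀ z : ℂ, ‖z‖ ≤ r → Summable (fun n : ℕ => a (n + 2) * z ^ (n + 2)) := by
    intro z hz
    apply Summable.of_norm_bounded hsa
    intro n
    rw [norm_mul, norm_pow]
    calc ‖a (n + 2)‖ * ‖z‖ ^ (n + 2) ≤ ‖a (n + 2)‖ * 1 := by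
          gcongr
          exact pow_le_one₀ (norm_nonneg _) (hz.trans hr1.le)
      _ ≤ ((n : ℝ) + 2) * ‖a (n + 2)‖ := by nlinarith [norm_nonneg (a (n + 2))]
  have hsumB : ∀ z : ℂ, ‖z‖ ≤ r → Summable (fun n : ℕ => b (n + 1) * z ^ (n + 1)) := by
    intro z hz
    apply Summable.of_norm_bounded hsb
    intro n
    rw [norm_mul, norm_pow]
    calc ‖b (n + 1)‖ * ‖z‖ ^ (n + 1) ≤ ‖b (n + 1)‖ * 1 := by
          gcongr
          exact pow_le_one₀ (norm_nonneg _) (hz.trans hr1.le)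
      _ ≤ ((n : ℝ) + 1) * ‖b (n + 1)‖ := by nlinarith [norm_nonneg (b (n + 1))]
  have hA1 := hsumA z₁ hz1r
  have hA2 := hsumA z₂ hz2r
  have hB1 := hsumB z₁ hz1r
  have hB2 := hsumB z₂ hz2r
  -- from f z₁ = f z₂
  have heq : d = -((∑' n : ℕ, a (n + 2) * z₁ ^ (n + 2)) - (∑' n : ℕ, a (n + 2) * z₂ ^ (n + 2)))
      - (starRingEnd ℂ) ((∑' n : ℕ, b (n + 1) * z₁ ^ (n + 1)) - (∑' n : ℕ, b (n + 1) * z₂ ^ (n + 1))) := by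
    have := hfeq
    rw [hf z₁ h1, hf z₂ h2] at this
    rw [hddef, map_sub]
    linear_combination this
  -- bound the a-difference
  have hdiffA : ‖(∑' n : ℕ, a (n + 2) * z₁ ^ (n + 2)) - (∑' n : ℕ, a (n + 2) * z₂ ^ (n + 2))‖
      ≤ Sa * (r * ‖d‖) := by
    rw [← Summable.tsum_sub hA1 hA2]
    have hbound : ∀ n : ℕ, ‖a (n + 2) * z₁ ^ (n + 2) - a (n + 2) * z₂ ^ (n + 2)‖
        ≤ (((n : ℝ) + 2) * ‖a (n + 2)‖) * (r * ‖d‖) := by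
      intro n
      rw [← mul_sub, norm_mul]
      have hp := pow_diff_bound z₁ z₂ r hr0 hz1r hz2r (n + 1)
      push_cast at hp
      calc ‖a (n + 2)‖ * ‖z₁ ^ (n + 2) - z₂ ^ (n + 2)‖
          ≤ ‖a (n + 2)‖ * (((n : ℝ) + 2) * r ^ (n + 1) * ‖d‖) := by
            gcongr
            refine le_of_le_of_eq hp ?_; rw [hddef]; ring
        _ ≤ (((n : ℝ) + 2) * ‖a (n + 2)‖) * (r * ‖d‖) := by
            have hrp : r ^ (n + 1) ≤ r := by
              calc r ^ (n + 1) = r * r ^ n := by ring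
                _ ≤ r * 1 := by gcongr; exact pow_le_one₀ hr0 hr1.le
                _ = r := mul_one r
            have hcc : (0:ℝ) ≤ ((n : ℝ) + 2) * ‖a (n + 2)‖ * ‖d‖ := by positivity
            nlinarith [mul_le_mul_of_nonneg_left hrp hcc]
    calc ‖∑' n : ℕ, (a (n + 2) * z₁ ^ (n + 2) - a (n + 2) * z₂ ^ (n + 2))‖
        ≤ ∑' n : ℕ, ((((n : ℝ) + 2) * ‖a (n + 2)‖) * (r * ‖d‖)) := by
          apply tsum_of_norm_bounded _ hbound
          exact (hsa.mul_right _).hasSum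
      _ = Sa * (r * ‖d‖) := by rw [tsum_mul_right, ← hSadef]
  -- bound the b-difference
  have hdiffB : ‖(∑' n : ℕ, b (n + 1) * z₁ ^ (n + 1)) - (∑' n : ℕ, b (n + 1) * z₂ ^ (n + 1))‖
      ≤ ‖b 1‖ * ‖d‖ + Sb * (r * ‖d‖) := by
    rw [← Summable.tsum_sub hB1 hB2]
    have hsubsum : Summable (fun n : ℕ => b (n + 1) * z₁ ^ (n + 1) - b (n + 1) * z₂ ^ (n + 1)) :=
      hB1.sub hB2
    rw [Summable.tsum_eq_zero_add hsubsum]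
    have h0 : ‖b 1 * z₁ ^ 1 - b 1 * z₂ ^ 1‖ = ‖b 1‖ * ‖d‖ := by
      rw [← mul_sub, norm_mul]; congr 1; rw [hddef]; ring_nf
    have htail : ‖∑' n : ℕ, (b (n + 1 + 1) * z₁ ^ (n + 1 + 1) - b (n + 1 + 1) * z₂ ^ (n + 1 + 1))‖
        ≤ Sb * (r * ‖d‖) := by
      have hbound : ∀ n : ℕ, ‖b (n + 2) * z₁ ^ (n + 2) - b (n + 2) * z₂ ^ (n + 2)‖
          ≤ (((n : ℝ) + 2) * ‖b (n + 2)‖) * (r * ‖d‖) := by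
        intro n
        rw [← mul_sub, norm_mul]
        have hp := pow_diff_bound z₁ z₂ r hr0 hz1r hz2r (n + 1)
        push_cast at hp
        calc ‖b (n + 2)‖ * ‖z₁ ^ (n + 2) - z₂ ^ (n + 2)‖
            ≤ ‖b (n + 2)‖ * (((n : ℝ) + 2) * r ^ (n + 1) * ‖d‖) := by
              gcongr
              refine le_of_le_of_eq hp ?_; rw [hddef]; ring
          _ ≤ (((n : ℝ) + 2) * ‖b (n + 2)‖) * (r * ‖d‖) := by
              have hrp : r ^ (n + 1) ≤ r := by
                calc r ^ (n + 1) = r * r ^ n := by ring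
                  _ ≤ r * 1 := by gcongr; exact pow_le_one₀ hr0 hr1.le
                  _ = r := mul_one r
              have hcc : (0:ℝ) ≤ ((n : ℝ) + 2) * ‖b (n + 2)‖ * ‖d‖ := by positivity
              nlinarith [mul_le_mul_of_nonneg_left hrp hcc]
      calc ‖∑' n : ℕ, (b (n + 1 + 1) * z₁ ^ (n + 1 + 1) - b (n + 1 + 1) * z₂ ^ (n + 1 + 1))‖
          ≤ ∑' n : ℕ, ((((n : ℝ) + 2) * ‖b (n + 2)‖) * (r * ‖d‖)) := by
            apply tsum_of_norm_bounded _ (fun n => hbound n)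
            exact (hsb'.mul_right _).hasSum
        _ = Sb * (r * ‖d‖) := by rw [tsum_mul_right, ← hSbdef]
    calc ‖(b (0 + 1) * z₁ ^ (0 + 1) - b (0 + 1) * z₂ ^ (0 + 1)) +
          ∑' n : ℕ, (b (n + 1 + 1) * z₁ ^ (n + 1 + 1) - b (n + 1 + 1) * z₂ ^ (n + 1 + 1))‖
        ≤ ‖b (0 + 1) * z₁ ^ (0 + 1) - b (0 + 1) * z₂ ^ (0 + 1)‖ +
          ‖∑' n : ℕ, (b (n + 1 + 1) * z₁ ^ (n + 1 + 1) - b (n + 1 + 1) * z₂ ^ (n + 1 + 1))‖ :=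
          norm_add_le _ _
      _ ≤ ‖b 1‖ * ‖d‖ + Sb * (r * ‖d‖) := by
          simp only [Nat.zero_add] at *
          exact add_le_add (le_of_eq h0) htail
  -- combine
  have hDle : ‖d‖ ≤ (‖b 1‖ + r * (Sa + Sb)) * ‖d‖ := by
    calc ‖d‖ = ‖-((∑' n : ℕ, a (n + 2) * z₁ ^ (n + 2)) - (∑' n : ℕ, a (n + 2) * z₂ ^ (n + 2)))
        - (starRingEnd ℂ) ((∑' n : ℕ, b (n + 1) * z₁ ^ (n + 1)) - (∑' n : ℕ, b (n + 1) * z₂ ^ (n + 1)))‖ := by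
          rw [← heq]
      _ ≤ ‖(∑' n : ℕ, a (n + 2) * z₁ ^ (n + 2)) - (∑' n : ℕ, a (n + 2) * z₂ ^ (n + 2))‖ +
          ‖(∑' n : ℕ, b (n + 1) * z₁ ^ (n + 1)) - (∑' n : ℕ, b (n + 1) * z₂ ^ (n + 1))‖ := by
          refine (norm_sub_le _ _).trans ?_
          rw [norm_neg, RCLike.norm_conj]
      _ ≤ Sa * (r * ‖d‖) + (‖b 1‖ * ‖d‖ + Sb * (r * ‖d‖)) := add_le_add hdiffA hdiffB
      _ = (‖b 1‖ + r * (Sa + Sb)) * ‖d‖ := by ring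
  have hc : ‖b 1‖ + r * (Sa + Sb) < 1 := by
    have : r * (Sa + Sb) ≤ r * (1 - ‖b 1‖) := by
      apply mul_le_mul_of_nonneg_left hkey hr0
    nlinarith
  nlinarith [hDle, hc, hD]
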